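/- For all natural numbers k and v and all real numbers x and t, the v-th derivative with respect to t of the generating function f_{B,k}(x,t) = t^k x^k e^{(1-x)t}/k! satisfies ∂^v f_{B,k}(x,t)/∂t^v = ∑_{j=0}^v B_j^v(x) f_{B,k-j}(x,t), where the terms with j > k are taken to be 0. -/

import Mathlib

/-- Bernstein basis function `B_k^n(x) = C(n,k) x^k (1-x)^(n-k)`;
by convention it is `0` when `k > n` since then `C(n,k) = 0`. -/
def bern (n k : ℕ) (x : ℝ) : ℝ := (n.choose k : ℝ) * x ^ k * (1 - x) ^ (n - k)

/-- Generating function for the Bernstein basis functions: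
`f_{B,k}(x,t) = t^k x^k e^((1-x)t) / k!`. -/
noncomputable def bernGen (k : ℕ) (x t : ℝ) : ℝ :=
  t ^ k * x ^ k * Real.exp ((1 - x) * t) / (Nat.factorial k : ℝ)

lemma bern_self_succ (v : ℕ) (x : ℝ) : bern v (v + 1) x = 0 := by
  simp [bern, Nat.choose_eq_zero_of_lt (Nat.lt_succ_self v)]

lemma bern_pascal (v i : ℕ) (x : ℝ) :
    bern (v + 1) (i + 1) x = (1 - x) * bern v (i + 1) x + x * bern v i x := by
  unfold bern
  rw [Nat.choose_succ_succ, Nat.succ_sub_succ]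
  by_cases h : i + 1 ≤ v
  · have hv : v - i = (v - (i + 1)) + 1 := by omega
    rw [hv]
    push_cast
    ring
  · have h1 : v.choose (i + 1) = 0 := Nat.choose_eq_zero_of_lt (by omega)
    rw [h1]
    push_cast
    ring

lemma hasDerivAt_bernGen (m : ℕ) (x t : ℝ) :
    HasDerivAt (fun s : ℝ => bernGen m x s)
      (x * (if 1 ≤ m then bernGen (m - 1) x t else 0) + (1 - x) * bernGen m x t) t := by
  have he : HasDerivAt (fun s : ℝ => Real.exp ((1 - x) * s))
      ((1 - x) * Real.exp ((1 - x) * t)) t := by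
    have h1 : HasDerivAt (fun s : ℝ => (1 - x) * s) (1 - x) t := by
      simpa using (hasDerivAt_id t).const_mul (1 - x)
    simpa [mul_comm] using h1.exp
  have hp : HasDerivAt (fun s : ℝ => s ^ m) (m * t ^ (m - 1)) t := hasDerivAt_pow m t
  have hf : (fun s : ℝ => bernGen m x s)
      = fun s => (x ^ m / (m.factorial : ℝ)) * (s ^ m * Real.exp ((1 - x) * s)) := by
    funext s
    simp only [bernGen]
    ring
  rw [hf]
  have key : x * (if 1 ≤ m then bernGen (m - 1) x t else 0) + (1 - x) * bernGen m x t
      = (x ^ m / (m.factorial : ℝ)) *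
        ((m * t ^ (m - 1)) * Real.exp ((1 - x) * t) + t ^ m * ((1 - x) * Real.exp ((1 - x) * t))) := by
    cases m with
    | zero => simp [bernGen]
    | succ n =>
      have h0 : ((n.factorial : ℝ)) ≠ 0 := by
        exact_mod_cast Nat.factorial_ne_zero n
      have h0' : ((n + 1 : ℕ) : ℝ) ≠ 0 := by positivity
      simp only [if_pos (by omega : 1 ≤ n + 1), Nat.add_sub_cancel, bernGen,
        Nat.factorial_succ]
      push_cast
      field_simp
      ring
  rw [key]
  exact (hp.mul he).const_mul _

theorem iteratedDeriv_bernGen_t (k v : ℕ) (x t : ℝ) :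
    iteratedDeriv v (fun s : ℝ => bernGen k x s) t =
      ∑ j ∈ Finset.range (v + 1),
        bern v j x * (if j ≤ k then bernGen (k - j) x t else 0) := by
  induction v generalizing t with
  | zero => simp [bern]
  | succ v ih =>
    rw [iteratedDeriv_succ,
      show iteratedDeriv v (fun s : ℝ => bernGen k x s)
        = fun t => ∑ j ∈ Finset.range (v + 1),
            bern v j x * (if j ≤ k then bernGen (k - j) x t else 0) from funext ih]
    set g : ℕ → ℝ := fun j => if j ≤ k then bernGen (k - j) x t else 0 with hg
    have hs : HasDerivAt
        (fun t : ℝ => ∑ j ∈ Finset.range (v + 1),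
          bern v j x * (if j ≤ k then bernGen (k - j) x t else 0))
        (∑ j ∈ Finset.range (v + 1),
          bern v j x * (x * g (j + 1) + (1 - x) * g j)) t := by
      apply HasDerivAt.fun_sum
      intro j hj
      by_cases h : j ≤ k
      · have hd := (hasDerivAt_bernGen (k - j) x t).const_mul (bern v j x)
        have hval : bern v j x *
            (x * (if 1 ≤ k - j then bernGen (k - j - 1) x t else 0)
              + (1 - x) * bernGen (k - j) x t)
            = bern v j x * (x * g (j + 1) + (1 - x) * g j) := by
          simp only [hg]
          rw [if_pos h]
          by_cases h2 : j + 1 ≤ k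
          · rw [if_pos (by omega : 1 ≤ k - j), if_pos h2,
              show k - j - 1 = k - (j + 1) by omega]
          · rw [if_neg (by omega : ¬ 1 ≤ k - j), if_neg h2]
        simp only [if_pos h]
        exact hval ▸ hd
      · have hval : bern v j x * (x * g (j + 1) + (1 - x) * g j) = 0 := by
          simp only [hg]
          rw [if_neg h, if_neg (by omega : ¬ j + 1 ≤ k)]
          ring
        simp only [if_neg h, mul_zero]
        rw [hval]
        exact hasDerivAt_const t 0
    rw [hs.deriv]
    -- now the purely algebraic identity
    rw [Finset.sum_range_succ' (fun j => bern (v + 1) j x * g j) (v + 1)]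
    simp_rw [bern_pascal]
    have h2 : ∑ j ∈ Finset.range (v + 1), bern v j x * (x * g (j + 1) + (1 - x) * g j)
        = (∑ i ∈ Finset.range (v + 1), x * bern v i x * g (i + 1))
          + ((∑ i ∈ Finset.range v, (1 - x) * bern v (i + 1) x * g (i + 1))
            + (1 - x) * bern v 0 x * g 0) := by
      rw [← Finset.sum_range_succ' (fun j => (1 - x) * bern v j x * g j) v,
        ← Finset.sum_add_distrib]
      apply Finset.sum_congr rfl
      intros; ring
    rw [h2]
    have hsplit : ∑ i ∈ Finset.range (v + 1),
        ((1 - x) * bern v (i + 1) x + x * bern v i x) * g (i + 1)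
        = (∑ i ∈ Finset.range (v + 1), (1 - x) * bern v (i + 1) x * g (i + 1))
          + (∑ i ∈ Finset.range (v + 1), x * bern v i x * g (i + 1)) := by
      rw [← Finset.sum_add_distrib]
      exact Finset.sum_congr rfl (by intros; ring)
    have h3 : ∑ i ∈ Finset.range (v + 1), (1 - x) * bern v (i + 1) x * g (i + 1)
        = ∑ i ∈ Finset.range v, (1 - x) * bern v (i + 1) x * g (i + 1) := by
      rw [Finset.sum_range_succ, bern_self_succ]
      ring
    have h4 : bern (v + 1) 0 x = (1 - x) * bern v 0 x := by
      simp only [bern, Nat.choose_zero_right, pow_zero, Nat.sub_zero, Nat.cast_one]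
      ring
    rw [hsplit, h3, h4]
    ring
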